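/- arXiv:2104.10799 — 2 statements merged into one kernel-verified Lean document; each statement's English description precedes it below -/
import Mathlib

section
/- Let d ≥ 2, let (X_1, …, X_d) be a Latin hypercube sample of N = d points in [0,1)^d, let ε ∈ (0, 1/d), and set D = [0, (d−1)/d + ε)^d \ [0, (d−1)/d)^d. Then P(X_1 ∈ D, X_2 ∈ D, …, X_d ∈ D) = d! · ε^d. -/
open MeasureTheory ProbabilityTheory Filter
open scoped ENNReal Classical

namespace LHSPaper

/-- The anchored box `[0,a) = ∏_i [0, a_i)` in `[0,1)^d`. -/
def anchoredBox {d : ℕ} (a : Fin d → ℝ) : Set (Fin d → ℝ) := {x | ∀ i, x i ∈ Set.Ico 0 (a i)}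

/-- `C^d_0`, the collection of anchored boxes `[0,a)` with `a ∈ [0,1]^d`. -/
def anchoredBoxes (d : ℕ) : Set (Set (Fin d → ℝ)) :=
  {S | ∃ a : Fin d → ℝ, (∀ i, a i ∈ Set.Icc (0 : ℝ) 1) ∧ S = anchoredBox a}

/-- `D^d_0`, the collection of differences `B \ A` of anchored boxes. -/
def boxDiffs (d : ℕ) : Set (Set (Fin d → ℝ)) :=
  {S | ∃ A ∈ anchoredBoxes d, ∃ B ∈ anchoredBoxes d, S = B \ A}

/-- The half-open unit cube `[0,1)^d`. -/
def unitCube (d : ℕ) : Set (Fin d → ℝ) := {x | ∀ i, x i ∈ Set.Ico (0 : ℝ) 1}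

/-- `γ`-negative dependence of the indicators of the events `A 1, …, A N`. -/
def GammaNegDep {Ω : Type*} [MeasurableSpace Ω] (μ : Measure Ω) {N : ℕ}
    (γ : ℝ≥0∞) (A : Fin N → Set Ω) : Prop :=
  ∀ J : Finset (Fin N), J.Nonempty →
    μ (⋂ j ∈ J, A j) ≤ γ * ∏ j ∈ J, μ (A j) ∧
    μ (⋂ j ∈ J, (A j)ᶜ) ≤ γ * ∏ j ∈ J, μ (A j)ᶜ

/-- The `𝒮`-correlation number of a random point tuple `X`. -/
noncomputable def corrNum {Ω : Type*} [MeasurableSpace Ω] (μ : Measure Ω) {N d : ℕ}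
    (𝒮 : Set (Set (Fin d → ℝ))) (X : Fin N → Ω → Fin d → ℝ) : ℝ≥0∞ :=
  ⨆ (S : Set (Fin d → ℝ)) (_ : S ∈ 𝒮) (J : Finset (Fin N)) (_ : J.Nonempty),
    max (μ (⋂ j ∈ J, {ω | X j ω ∈ S}) / ∏ j ∈ J, μ {ω | X j ω ∈ S})
        (μ (⋂ j ∈ J, {ω | X j ω ∉ S}) / ∏ j ∈ J, μ {ω | X j ω ∉ S})

instance (N : ℕ) : MeasurableSpace (Equiv.Perm (Fin N)) := ⊤

instance (N : ℕ) : Nonempty (Equiv.Perm (Fin N)) := ⟨Equiv.refl _⟩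

/-- Value types of the sources of randomness of a Latin hypercube sample:
`d` random permutations and `N·d` random reals. -/
def lhsβ (d N : ℕ) : (Fin d ⊕ (Fin N × Fin d)) → Type :=
  fun i => Sum.elim (fun _ => Equiv.Perm (Fin N)) (fun _ => ℝ) i

noncomputable def lhsMS (d N : ℕ) : (i : Fin d ⊕ (Fin N × Fin d)) → MeasurableSpace (lhsβ d N i) :=
  fun i => match i with
  | .inl _ => ⊤
  | .inr _ => inferInstanceAs (MeasurableSpace ℝ)

def lhsFun {Ω : Type*} {d N : ℕ} (π : Fin d → Ω → Equiv.Perm (Fin N))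
    (U : Fin N → Ω → Fin d → ℝ) : (i : Fin d ⊕ (Fin N × Fin d)) → Ω → lhsβ d N i :=
  fun i => match i with
  | .inl j => π j
  | .inr p => fun ω => U p.1 ω p.2

/-- `X` is a Latin hypercube sample of `N` points in `[0,1)^d`, built from the
uniformly distributed random permutations `π_j` and the uniformly distributed
random variables `U_{n,j}`, all mutually independent. -/
def IsLHS {Ω : Type*} [MeasurableSpace Ω] (μ : Measure Ω) (d N : ℕ)
    (X : Fin N → Ω → Fin d → ℝ)
    (π : Fin d → Ω → Equiv.Perm (Fin N)) (U : Fin N → Ω → Fin d → ℝ) : Prop :=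
  (∀ j, Measure.map (π j) μ = (PMF.uniformOfFintype (Equiv.Perm (Fin N))).toMeasure) ∧
  (∀ n j, Measure.map (fun ω => U n ω j) μ = volume.restrict (Set.Ico (0 : ℝ) 1)) ∧
  @iIndepFun _ _ _ _ (lhsMS d N) (lhsFun π U) μ ∧
  (∀ n j ω, X n ω j = (((π j ω) n : ℕ) + U n ω j) / N)

/-- An elementary interval in base `b` of order `k` in `[0,1)^d`. -/
def IsElemInterval (b d k : ℕ) (E : Set (Fin d → ℝ)) : Prop :=
  ∃ ℓ : Fin d → ℕ, ∃ a : Fin d → ℕ, (∀ i, a i < b ^ ℓ i) ∧ (∑ i, ℓ i = k) ∧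
    E = {x | ∀ i, x i ∈ Set.Ico ((a i : ℝ) / b ^ ℓ i) (((a i : ℝ) + 1) / b ^ ℓ i)}

/-- A `(t,m,d)`-net in base `b`: `b^m` points in `[0,1)^d` such that every elementary
interval of order `m - t` contains exactly `b^t` points (with multiplicity). -/
def IsNet (b d m t : ℕ) (P : Fin (b ^ m) → Fin d → ℝ) : Prop :=
  (∀ n, P n ∈ unitCube d) ∧
  ∀ E : Set (Fin d → ℝ), IsElemInterval b d (m - t) E →
    (Finset.univ.filter fun n => P n ∈ E).card = b ^ t

/-- A `b`-ary scrambling of depth `ℓ`: a self-map of `[0,1)` mapping, for each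
`k ∈ {1,…,ℓ}`, elementary intervals of order `k` into elementary intervals of order `k`,
distinct ones into distinct ones. -/
def IsScrambling (b ℓ : ℕ) (σ : ℝ → ℝ) : Prop :=
  (∀ x ∈ Set.Ico (0 : ℝ) 1, σ x ∈ Set.Ico (0 : ℝ) 1) ∧
  ∀ k, 1 ≤ k → k ≤ ℓ → ∃ f : ℕ → ℕ,
    (∀ a < b ^ k, f a < b ^ k) ∧
    (∀ a < b ^ k, ∀ a' < b ^ k, a ≠ a' → f a ≠ f a') ∧
    (∀ a < b ^ k, ∀ x ∈ Set.Ico ((a : ℝ) / b ^ k) (((a : ℝ) + 1) / b ^ k),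
      σ x ∈ Set.Ico ((f a : ℝ) / b ^ k) (((f a : ℝ) + 1) / b ^ k))

/-- A basic cube of an abstract scrambled `(t,m,d)`-net in base `b`. -/
def IsBasicCube (b d m t : ℕ) (C : Set (Fin d → ℝ)) : Prop :=
  ∃ k : Fin d → ℕ, (∀ j, k j < b ^ (m - t)) ∧
    C = {x | ∀ j, x j ∈ Set.Ico ((k j : ℝ) / b ^ (m - t)) (((k j : ℝ) + 1) / b ^ (m - t))}

/-- An abstract scrambled `(t,m,d)`-net in base `b`. -/
def IsAbstractScrambledNet {Ω : Type*} [MeasurableSpace Ω] (μ : Measure Ω)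
    (b d m t : ℕ) (Y : Fin (b ^ m) → Ω → (Fin d → ℝ)) : Prop :=
  (∀ᵐ ω ∂μ, IsNet b d m t fun n => Y n ω) ∧
  (∀ i C, IsBasicCube b d m t C → μ {ω | Y i ω ∈ C} = ((b : ℝ≥0∞) ^ (d * (m - t)))⁻¹) ∧
  (∀ M : Set (Fin d → ℝ), MeasurableSet M →
    ∀ J : Finset (Fin (b ^ m)), J.Nonempty →
    ∀ C : Fin (b ^ m) → Set (Fin d → ℝ), (∀ j ∈ J, IsBasicCube b d m t (C j)) →
      μ (⋂ j ∈ J, {ω | Y j ω ∈ C j}) ≠ 0 →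
      (μ[|⋂ j ∈ J, {ω | Y j ω ∈ C j}]) (⋂ j ∈ J, {ω | Y j ω ∈ M}) =
        ∏ j ∈ J, volume (M ∩ C j) / volume (C j))



/-- Auxiliary: cardinality of fibers of the evaluation map on permutations. -/
lemma card_perm_fiber {α : Type*} [DecidableEq α] [Fintype α] (x y : α) :
    (Finset.univ.filter fun p : Equiv.Perm α => p x = y).card * Fintype.card α
      = Fintype.card (Equiv.Perm α) := by
  classical
  have h1 : ∀ b : α, (Finset.univ.filter fun p : Equiv.Perm α => p x = b).card
      = (Finset.univ.filter fun p : Equiv.Perm α => p x = y).card := by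
    intro b
    apply Finset.card_bij (fun p _ => p.trans (Equiv.swap b y))
    · intro p hp
      simp only [Finset.mem_filter, Finset.mem_univ, true_and] at hp ⊢
      simp [Equiv.trans_apply, hp]
    · intro p hp q hq hpq
      ext z
      have h := DFunLike.congr_fun hpq z
      simp only [Equiv.trans_apply] at h
      exact (Equiv.swap b y).injective h
    · intro q hq
      simp only [Finset.mem_filter, Finset.mem_univ, true_and] at hq
      refine ⟨q.trans (Equiv.swap b y), ?_, ?_⟩
      · simp [Finset.mem_filter, Equiv.trans_apply, hq]
      · ext z; simp [Equiv.trans_apply]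
  have h3 : Fintype.card (Equiv.Perm α) = ∑ b : α, (Finset.univ.filter
      fun p : Equiv.Perm α => p x = b).card := by
    rw [← Finset.card_univ]
    exact Finset.card_eq_sum_card_fiberwise fun p _ => Finset.mem_univ (p x)
  rw [h3]
  simp [h1, Finset.sum_const, Finset.card_univ, mul_comm]

/-- The uniform measure of `{p | p x = y}` in `Perm (Fin N)` is `1/N`. -/
lemma uniform_perm_measure {N : ℕ} [NeZero N] (x y : Fin N) :
    (PMF.uniformOfFintype (Equiv.Perm (Fin N))).toMeasure {p | p x = y}
      = (N : ℝ≥0∞)⁻¹ := by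
  classical
  have hN : (N : ℝ≥0∞) ≠ 0 := by exact_mod_cast Nat.cast_ne_zero.2 (NeZero.ne N)
  have hcard : (0:ℕ) < Fintype.card (Equiv.Perm (Fin N)) := Fintype.card_pos
  have key : (PMF.uniformOfFintype (Equiv.Perm (Fin N))).toMeasure {p | p x = y} * N = 1 := by
    rw [PMF.toMeasure_apply_fintype]
    have heq : ∀ p : Equiv.Perm (Fin N),
        ({p : Equiv.Perm (Fin N) | p x = y}).indicator
          (PMF.uniformOfFintype (Equiv.Perm (Fin N))) p
        = if p x = y then (Fintype.card (Equiv.Perm (Fin N)) : ℝ≥0∞)⁻¹ else 0 := by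
      intro p
      by_cases hp : p x = y <;> simp [Set.indicator, hp, PMF.uniformOfFintype_apply]
    rw [Finset.sum_congr rfl fun p _ => heq p]
    rw [← Finset.sum_filter]
    simp only [Finset.sum_const, nsmul_eq_mul]
    have hfib := card_perm_fiber x y
    have hN' : Fintype.card (Fin N) = N := Fintype.card_fin N
    have hkey : (Finset.univ.filter fun p : Equiv.Perm (Fin N) => p x = y).card * N
        = Fintype.card (Equiv.Perm (Fin N)) := by rw [← hfib, hN']
    rw [mul_comm ((Finset.univ.filter fun p : Equiv.Perm (Fin N) => p x = y).card : ℝ≥0∞)]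
    rw [mul_assoc, ← Nat.cast_mul, hkey]
    rw [ENNReal.inv_mul_cancel (by exact_mod_cast hcard.ne') (by simp)]
  have hfin : (N : ℝ≥0∞) ≠ ∞ := by simp
  calc (PMF.uniformOfFintype (Equiv.Perm (Fin N))).toMeasure {p | p x = y}
      = (PMF.uniformOfFintype (Equiv.Perm (Fin N))).toMeasure {p | p x = y} * N * (N:ℝ≥0∞)⁻¹ := by
        rw [mul_assoc, ENNReal.mul_inv_cancel hN hfin, mul_one]
    _ = (N : ℝ≥0∞)⁻¹ := by rw [key, one_mul]

lemma memIco_lower_iff {d k : ℕ} (hd : 2 ≤ d) {u : ℝ} (hu : u ∈ Set.Ico (0:ℝ) 1)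
    (hk : k < d) :
    ((k : ℝ) + u) / d ∈ Set.Ico (0:ℝ) (((d:ℝ) - 1) / d) ↔ k + 1 < d := by
  have hd0 : (0:ℝ) < d := by positivity
  obtain ⟨hu0, hu1⟩ := hu
  rw [Set.mem_Ico, le_div_iff₀ hd0, div_lt_div_iff₀ hd0 hd0]
  constructor
  · rintro ⟨-, h2⟩
    by_contra hlt
    have hkd : k + 1 = d := by omega
    have : (k : ℝ) + 1 = d := by exact_mod_cast hkd
    nlinarith
  · intro h
    have h2 : (k:ℝ) + 1 + 1 ≤ d := by exact_mod_cast h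
    constructor
    · nlinarith
    · nlinarith

lemma memIco_upper_iff {d k : ℕ} (hd : 2 ≤ d) {ε u : ℝ} (hε0 : 0 < ε) (hε1 : ε < 1 / d)
    (hu : u ∈ Set.Ico (0:ℝ) 1) (hk : k < d) :
    ((k : ℝ) + u) / d ∈ Set.Ico (0:ℝ) (((d:ℝ) - 1) / d + ε)
      ↔ (k + 1 < d ∨ (k + 1 = d ∧ u < d * ε)) := by
  have hd0 : (0:ℝ) < d := by positivity
  obtain ⟨hu0, hu1⟩ := hu
  have hde : (d:ℝ) * ε < 1 := by
    have := (lt_div_iff₀ hd0).1 hε1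
    linarith
  rw [Set.mem_Ico, le_div_iff₀ hd0, div_lt_iff₀ hd0]
  have hexp : (((d:ℝ) - 1) / d + ε) * d = (d:ℝ) - 1 + d * ε := by
    field_simp
  rw [hexp]
  constructor
  · rintro ⟨-, h2⟩
    rcases lt_or_ge (k + 1) d with h | h
    · exact Or.inl h
    · have hkd : k + 1 = d := by omega
      right
      refine ⟨hkd, ?_⟩
      have : (k : ℝ) + 1 = d := by exact_mod_cast hkd
      nlinarith
  · rintro (h | ⟨h, hud⟩)
    · have h2 : (k:ℝ) + 1 + 1 ≤ d := by exact_mod_cast h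
      constructor
      · nlinarith
      · nlinarith
    · have h2 : (k : ℝ) + 1 = d := by exact_mod_cast h
      constructor
      · nlinarith
      · nlinarith

/-- Auxiliary dependent family of sets used in the independence computation. -/
def lhsSets (d : ℕ) (ε : ℝ) (lastd : Fin d) (σ : Equiv.Perm (Fin d)) :
    (i : Fin d ⊕ (Fin d × Fin d)) → Set (lhsβ d d i) :=
  fun i => match i with
  | .inl j => {p : Equiv.Perm (Fin d) | p (σ j) = lastd}
  | .inr p => ((if p.1 = σ p.2 then Set.Ico (0:ℝ) ((d:ℝ)*ε) else Set.univ) : Set ℝ)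

@[simp] lemma lhsSets_inl (d : ℕ) (ε : ℝ) (lastd : Fin d) (σ : Equiv.Perm (Fin d)) (j : Fin d) :
    lhsSets d ε lastd σ (.inl j) = {p : Equiv.Perm (Fin d) | p (σ j) = lastd} := rfl

@[simp] lemma lhsSets_inr (d : ℕ) (ε : ℝ) (lastd : Fin d) (σ : Equiv.Perm (Fin d))
    (p : Fin d × Fin d) :
    lhsSets d ε lastd σ (.inr p)
      = (if p.1 = σ p.2 then Set.Ico (0:ℝ) ((d:ℝ)*ε) else Set.univ) := rfl

/-- For a LHS of `N = d` points in `[0,1)^d`, `ε ∈ (0,1/d)` and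
`D = [0,(d-1)/d+ε)^d \ [0,(d-1)/d)^d`, one has `P(X_1,…,X_d ∈ D) = d! ε^d`. -/
theorem stmt2 {Ω : Type*} [MeasurableSpace Ω] (μ : Measure Ω) [IsProbabilityMeasure μ]
    (d : ℕ) (hd : 2 ≤ d)
    (X : Fin d → Ω → Fin d → ℝ) (π : Fin d → Ω → Equiv.Perm (Fin d))
    (U : Fin d → Ω → Fin d → ℝ) (h : IsLHS μ d d X π U)
    (ε : ℝ) (hε : ε ∈ Set.Ioo (0 : ℝ) (1 / (d : ℝ)))
    (D : Set (Fin d → ℝ))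
    (hD : D = anchoredBox (fun _ => ((d : ℝ) - 1) / d + ε) \
              anchoredBox (fun _ => ((d : ℝ) - 1) / d)) :
    μ {ω | ∀ n, X n ω ∈ D} = ENNReal.ofReal ((d.factorial : ℝ) * ε ^ d) := by
  classical
  obtain ⟨hπd, hUd, hind, hX⟩ := h
  have hd0 : 0 < d := by omega
  haveI : NeZero d := ⟨hd0.ne'⟩
  obtain ⟨hε0, hε1⟩ := hε
  set lastd : Fin d := ⟨d - 1, by omega⟩ with hlastd
  have hlast_val : (lastd : ℕ) = d - 1 := rfl
  -- a.e. measurability of the building blocks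
  have hπa : ∀ j, AEMeasurable (π j) μ := by
    intro j
    by_contra hc
    have h0 := Measure.map_of_not_aemeasurable hc
    have h1 : (Measure.map (π j) μ) Set.univ = 1 := by
      rw [hπd j]; exact measure_univ
    rw [h0] at h1
    simp at h1
  have hUa : ∀ n j, AEMeasurable (fun ω => U n ω j) μ := by
    intro n j
    by_contra hc
    have h0 := Measure.map_of_not_aemeasurable hc
    have h1 := hUd n j
    rw [h0] at h1
    have h2 : (volume.restrict (Set.Ico (0:ℝ) 1)) (Set.Ico (0:ℝ) 1) = 0 := by
      rw [← h1]; simp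
    rw [Measure.restrict_apply measurableSet_Ico] at h2
    simp [Real.volume_Ico] at h2
  have hπm : ∀ j (s : Set (Equiv.Perm (Fin d))), μ (π j ⁻¹' s)
      = (PMF.uniformOfFintype (Equiv.Perm (Fin d))).toMeasure s := by
    intro j s
    rw [← hπd j, Measure.map_apply_of_aemeasurable (hπa j) MeasurableSpace.measurableSet_top]
  have hUm : ∀ n j (s : Set ℝ), MeasurableSet s → μ ((fun ω => U n ω j) ⁻¹' s)
      = volume.restrict (Set.Ico (0:ℝ) 1) s := by
    intro n j s hs
    rw [← hUd n j, Measure.map_apply_of_aemeasurable (hUa n j) hs]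
  -- the good event
  set G : Set Ω := {ω | ∀ n j, U n ω j ∈ Set.Ico (0:ℝ) 1} with hGdef
  have hGae : ∀ᵐ ω ∂μ, ω ∈ G := by
    rw [ae_iff]
    have hsub : {ω | ¬ ω ∈ G} ⊆
        ⋃ (n : Fin d), ⋃ (j : Fin d), (fun ω => U n ω j) ⁻¹' (Set.Ico (0:ℝ) 1)ᶜ := by
      intro ω hω
      simp only [hGdef, Set.mem_setOf_eq, not_forall] at hω
      obtain ⟨n, j, hnj⟩ := hω
      exact Set.mem_iUnion.2 ⟨n, Set.mem_iUnion.2 ⟨j, hnj⟩⟩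
    refine measure_mono_null hsub ?_
    refine measure_iUnion_null fun n => measure_iUnion_null fun j => ?_
    rw [hUm n j _ measurableSet_Ico.compl, Measure.restrict_apply measurableSet_Ico.compl]
    simp
  -- the events A σ
  set A : Equiv.Perm (Fin d) → Set Ω := fun σ =>
    (⋂ j, π j ⁻¹' {p : Equiv.Perm (Fin d) | p (σ j) = lastd}) ∩
    (⋂ j, (fun ω => U (σ j) ω j) ⁻¹' Set.Ico (0:ℝ) ((d:ℝ) * ε)) with hAdef
  have hBox : ∀ x : Fin d → ℝ, x ∈ D ↔
      ((∀ j, x j ∈ Set.Ico (0:ℝ) (((d:ℝ)-1)/d + ε)) ∧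
        ¬ (∀ j, x j ∈ Set.Ico (0:ℝ) (((d:ℝ)-1)/d))) := by
    intro x; rw [hD]; exact Iff.rfl
  -- pointwise description on G
  have hpoint : ∀ ω, ω ∈ G → ((∀ n, X n ω ∈ D) ↔ ∃ σ : Equiv.Perm (Fin d), ω ∈ A σ) := by
    intro ω hωG
    have hGn : ∀ n j, U n ω j ∈ Set.Ico (0:ℝ) 1 := hωG
    constructor
    · intro hE
      have hup : ∀ n j, (((π j ω) n : ℕ) + 1 < d ∨
          (((π j ω) n : ℕ) + 1 = d ∧ U n ω j < d * ε)) := by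
        intro n j
        have h1 := ((hBox _).1 (hE n)).1 j
        rw [hX n j ω] at h1
        exact (memIco_upper_iff hd hε0 hε1 (hGn n j) ((π j ω) n).isLt).1 h1
      have hsurj : ∀ n, ∃ j, π j ω n = lastd := by
        intro n
        have h2 := ((hBox _).1 (hE n)).2
        push_neg at h2
        obtain ⟨j, hj⟩ := h2
        refine ⟨j, ?_⟩
        have hk := ((π j ω) n).isLt
        have hnl : ¬ (((π j ω) n : ℕ) + 1 < d) := by
          intro hlt
          refine hj ?_
          rw [hX n j ω]
          exact (memIco_lower_iff hd (hGn n j) hk).2 hlt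
        have hkd : ((π j ω) n : ℕ) = d - 1 := by omega
        exact Fin.ext (by rw [hkd, hlast_val])
      set f : Fin d → Fin d := fun j => (π j ω).symm lastd with hfdef
      have hfs : Function.Surjective f := by
        intro n
        obtain ⟨j, hj⟩ := hsurj n
        refine ⟨j, ?_⟩
        rw [hfdef]
        simp only [← hj, Equiv.symm_apply_apply]
      have hfb := hfs.bijective_of_finite
      refine ⟨Equiv.ofBijective f hfb, ?_⟩
      have hπσ : ∀ j, π j ω (Equiv.ofBijective f hfb j) = lastd := by
        intro j
        show π j ω (f j) = lastd
        rw [hfdef]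
        exact Equiv.apply_symm_apply _ _
      refine Set.mem_inter (Set.mem_iInter.2 fun j => hπσ j) (Set.mem_iInter.2 fun j => ?_)
      have h3 := hup (Equiv.ofBijective f hfb j) j
      have hkval : (((π j ω) (Equiv.ofBijective f hfb j)) : ℕ) = d - 1 := by
        rw [hπσ j, hlast_val]
      rcases h3 with hlt | ⟨-, hud⟩
      · omega
      · exact ⟨(hGn _ _).1, hud⟩
    · rintro ⟨σ, hσ1, hσ2⟩
      have hπσ : ∀ j, π j ω (σ j) = lastd := fun j => Set.mem_iInter.1 hσ1 j
      have hUσ : ∀ j, U (σ j) ω j ∈ Set.Ico (0:ℝ) ((d:ℝ)*ε) := fun j => Set.mem_iInter.1 hσ2 j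
      intro n
      rw [hBox]
      constructor
      · intro j
        rw [hX n j ω]
        rw [memIco_upper_iff hd hε0 hε1 (hGn n j) ((π j ω) n).isLt]
        by_cases hn : n = σ j
        · right
          have hπn : π j ω n = lastd := by rw [hn]; exact hπσ j
          refine ⟨?_, ?_⟩
          · rw [hπn, hlast_val]; omega
          · have h4 := (hUσ j).2
            rw [← hn] at h4
            exact h4
        · left
          have hne : π j ω n ≠ lastd := by
            intro hc
            exact hn ((π j ω).injective (hc.trans (hπσ j).symm))
          have hv : ((π j ω) n : ℕ) ≠ d - 1 := by
            intro hc
            exact hne (Fin.ext (by rw [hc, hlast_val]))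
          have := ((π j ω) n).isLt
          omega
      · intro hall
        have hj := hall (σ.symm n)
        have hπn : π (σ.symm n) ω n = lastd := by
          have h5 := hπσ (σ.symm n)
          rwa [Equiv.apply_symm_apply] at h5
        rw [hX n (σ.symm n) ω] at hj
        rw [memIco_lower_iff hd (hGn n _) ((π (σ.symm n) ω) n).isLt] at hj
        have hv : ((π (σ.symm n) ω) n : ℕ) = d - 1 := by rw [hπn, hlast_val]
        omega
  -- reduce to the union
  have hEeq : μ {ω | ∀ n, X n ω ∈ D} = μ (⋃ σ : Equiv.Perm (Fin d), A σ) := by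
    apply measure_congr
    rw [Filter.eventuallyEq_set]
    filter_upwards [hGae] with ω hω
    simpa [Set.mem_iUnion] using hpoint ω hω
  -- disjointness
  have hdisj : Pairwise (Function.onFun Disjoint A) := by
    intro σ τ hστ
    rw [Function.onFun, Set.disjoint_left]
    intro ω hσω hτω
    apply hστ
    refine Equiv.ext fun j => ?_
    have h1 : π j ω (σ j) = lastd := Set.mem_iInter.1 hσω.1 j
    have h2 : π j ω (τ j) = lastd := Set.mem_iInter.1 hτω.1 j
    exact (π j ω).injective (h1.trans h2.symm)
  -- null measurability
  have hnm : ∀ σ, NullMeasurableSet (A σ) μ := by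
    intro σ
    refine NullMeasurableSet.inter ?_ ?_
    · exact .iInter fun j => (hπa j).nullMeasurable MeasurableSpace.measurableSet_top
    · exact .iInter fun j => (hUa (σ j) j).nullMeasurable measurableSet_Ico
  -- measure of each A σ via independence
  have hde1 : (d:ℝ) * ε ≤ 1 := by
    have hd0' : (0:ℝ) < d := by positivity
    have := (lt_div_iff₀ hd0').1 hε1
    linarith
  have hAσ : ∀ σ : Equiv.Perm (Fin d), μ (A σ)
      = ((d:ℝ≥0∞)⁻¹ * ENNReal.ofReal ((d:ℝ) * ε)) ^ d := by
    intro σ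
    have hmeas : ∀ i ∈ Finset.univ, MeasurableSet[lhsMS d d i] (lhsSets d ε lastd σ i) := by
      rintro (j | p) -
      · exact MeasurableSpace.measurableSet_top
      · show MeasurableSet[lhsMS d d (.inr p)] _
        rw [lhsSets_inr]
        split_ifs
        · exact (measurableSet_Ico : MeasurableSet (Set.Ico (0:ℝ) ((d:ℝ)*ε)))
        · exact (MeasurableSet.univ : MeasurableSet (Set.univ : Set ℝ))
    have key := hind.measure_inter_preimage_eq_mul Finset.univ hmeas
    have hL : (⋂ i ∈ Finset.univ, lhsFun π U i ⁻¹' lhsSets d ε lastd σ i) = A σ := by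
      ext ω
      simp only [Set.mem_iInter, Finset.mem_univ, true_implies, Sum.forall]
      rw [hAdef]
      constructor
      · rintro ⟨h1, h2⟩
        refine ⟨Set.mem_iInter.2 fun j => h1 j, Set.mem_iInter.2 fun j => ?_⟩
        have h3 := h2 ((σ j), j)
        simp only [lhsSets_inr, if_pos rfl] at h3
        exact h3
      · rintro ⟨h1, h2⟩
        refine ⟨fun j => Set.mem_iInter.1 h1 j, ?_⟩
        rintro ⟨n, j⟩
        show ω ∈ (fun ω => U n ω j) ⁻¹' (lhsSets d ε lastd σ (.inr (n, j)))
        rw [lhsSets_inr]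
        by_cases hn : n = σ j
        · rw [if_pos hn, hn]
          exact Set.mem_iInter.1 h2 j
        · rw [if_neg hn]
          exact Set.mem_univ ω
    rw [hL] at key
    rw [key, Fintype.prod_sum_type]
    have hfst : ∀ j : Fin d, μ (lhsFun π U (.inl j) ⁻¹' lhsSets d ε lastd σ (.inl j))
        = (d : ℝ≥0∞)⁻¹ := by
      intro j
      show μ (π j ⁻¹' {p : Equiv.Perm (Fin d) | p (σ j) = lastd}) = _
      rw [hπm, uniform_perm_measure]
    have hsnd : ∀ p : Fin d × Fin d,
        μ (lhsFun π U (.inr p) ⁻¹' lhsSets d ε lastd σ (.inr p))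
        = (if p.1 = σ p.2 then ENNReal.ofReal ((d:ℝ)*ε) else 1) := by
      rintro ⟨n, j⟩
      show μ ((fun ω => U n ω j) ⁻¹' (lhsSets d ε lastd σ (.inr (n, j)))) = _
      rw [lhsSets_inr]
      by_cases hn : n = σ j
      · rw [if_pos hn, if_pos hn]
        rw [hUm n j _ measurableSet_Ico, Measure.restrict_apply measurableSet_Ico]
        rw [Set.Ico_inter_Ico]
        simp only [max_self, ge_iff_le]
        rw [min_eq_left hde1]
        simp [Real.volume_Ico]
      · rw [if_neg hn, if_neg hn]
        simp
    rw [Finset.prod_congr rfl fun j _ => hfst j, Finset.prod_congr rfl fun p _ => hsnd p]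
    rw [Finset.prod_const, Finset.card_univ, Fintype.card_fin]
    have hprod : (∏ p : Fin d × Fin d, (if p.1 = σ p.2 then ENNReal.ofReal ((d:ℝ)*ε) else 1))
        = ENNReal.ofReal ((d:ℝ)*ε) ^ d := by
      rw [Fintype.prod_prod_type]
      have hinner : ∀ n : Fin d, (∏ j : Fin d, (if n = σ j then ENNReal.ofReal ((d:ℝ)*ε) else 1))
          = ENNReal.ofReal ((d:ℝ)*ε) := by
        intro n
        have hcond : ∀ j : Fin d, (n = σ j) = (σ.symm n = j) := by
          intro j
          apply propext
          constructor
          · intro h; rw [h, Equiv.symm_apply_apply]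
          · intro h; rw [← h, Equiv.apply_symm_apply]
        simp only [hcond]
        rw [Finset.prod_ite_eq]
        simp
      rw [Finset.prod_congr rfl fun n _ => hinner n]
      rw [Finset.prod_const, Finset.card_univ, Fintype.card_fin]
    rw [hprod, mul_pow]
  -- put everything together
  rw [hEeq, measure_iUnion₀ (fun σ τ h => (hdisj h).aedisjoint) hnm, tsum_fintype]
  rw [Finset.sum_congr rfl fun σ _ => hAσ σ]
  rw [Finset.sum_const, Finset.card_univ, Fintype.card_perm, Fintype.card_fin]
  have h1 : (d:ℝ≥0∞)⁻¹ * ENNReal.ofReal ((d:ℝ)*ε) = ENNReal.ofReal ε := by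
    rw [ENNReal.ofReal_mul (by positivity), ENNReal.ofReal_natCast, ← mul_assoc,
      ENNReal.inv_mul_cancel (by simp [hd0.ne']) (by simp), one_mul]
  rw [h1, nsmul_eq_mul, ← ENNReal.ofReal_pow hε0.le, ← ENNReal.ofReal_natCast,
    ← ENNReal.ofReal_mul (by positivity)]


end LHSPaper
end

section
/- Let d, N ∈ ℕ and let X = (X_n)_{n=1}^N be a Latin hypercube sample in [0,1)^d. Then each point X_n is uniformly distributed on [0,1)^d, i.e., the law of X_n is the d-dimensional Lebesgue measure restricted to [0,1)^d. -/
open MeasureTheory ProbabilityTheory Filter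
open scoped ENNReal Classical

namespace LHSPaper

lemma card_fiber_eq (N : ℕ) (n k k' : Fin N) :
    Fintype.card {σ : Equiv.Perm (Fin N) // σ n = k} =
      Fintype.card {σ : Equiv.Perm (Fin N) // σ n = k'} := by
  refine Fintype.card_congr ⟨fun σ => ⟨σ.1.trans (Equiv.swap k k'), by simp [σ.2]⟩,
    fun σ => ⟨σ.1.trans (Equiv.swap k k'), by simp [σ.2, Equiv.swap_apply_right]⟩, ?_, ?_⟩ <;>
  · rintro ⟨σ, hσ⟩
    ext x
    simp [Equiv.swap_apply_self]

lemma uniform_perm_eval (N : ℕ) (n k : Fin N) :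
    (PMF.uniformOfFintype (Equiv.Perm (Fin N))).toMeasure {σ | σ n = k} = (N : ℝ≥0∞)⁻¹ := by
  classical
  rw [PMF.toMeasure_apply_fintype]
  have hN0 : (N : ℝ≥0∞) ≠ 0 := by
    have : 0 < N := n.pos
    exact_mod_cast this.ne'
  haveI : Nonempty {σ : Equiv.Perm (Fin N) // σ n = k} :=
    ⟨⟨Equiv.swap n k, Equiv.swap_apply_left n k⟩⟩
  have hc0 : (Fintype.card {σ : Equiv.Perm (Fin N) // σ n = k} : ℝ≥0∞) ≠ 0 := by
    exact_mod_cast Fintype.card_ne_zero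
  have h2 : ∀ k' : Fin N,
      (Finset.univ.filter fun σ : Equiv.Perm (Fin N) => σ n = k').card =
        Fintype.card {σ : Equiv.Perm (Fin N) // σ n = k} := by
    intro k'
    rw [← Fintype.card_subtype]
    exact card_fiber_eq N n k' k
  have hcard : Fintype.card (Equiv.Perm (Fin N)) =
      Fintype.card {σ : Equiv.Perm (Fin N) // σ n = k} * N := by
    calc Fintype.card (Equiv.Perm (Fin N)) = (Finset.univ : Finset (Equiv.Perm (Fin N))).card :=
          (Finset.card_univ).symm
      _ = ∑ k' : Fin N, (Finset.univ.filter fun σ : Equiv.Perm (Fin N) => σ n = k').card :=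
          Finset.card_eq_sum_card_fiberwise (fun x _ => Finset.mem_univ _)
      _ = ∑ _k' : Fin N, Fintype.card {σ : Equiv.Perm (Fin N) // σ n = k} :=
          Finset.sum_congr rfl fun k' _ => h2 k'
      _ = Fintype.card {σ : Equiv.Perm (Fin N) // σ n = k} * N := by
          rw [Finset.sum_const, Finset.card_univ, Fintype.card_fin, smul_eq_mul, mul_comm]
  calc (∑ σ : Equiv.Perm (Fin N), {σ' : Equiv.Perm (Fin N) | σ' n = k}.indicator
        (PMF.uniformOfFintype (Equiv.Perm (Fin N))) σ)
      = ∑ σ : Equiv.Perm (Fin N), if σ n = k then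
          ((Fintype.card (Equiv.Perm (Fin N)) : ℝ≥0∞))⁻¹ else 0 := by
        refine Finset.sum_congr rfl fun σ _ => ?_
        simp [Set.indicator_apply, Set.mem_setOf_eq, PMF.uniformOfFintype_apply]
    _ = (Finset.univ.filter fun σ : Equiv.Perm (Fin N) => σ n = k).card •
          ((Fintype.card (Equiv.Perm (Fin N)) : ℝ≥0∞))⁻¹ := by
        rw [Finset.sum_ite, Finset.sum_const, Finset.sum_const_zero, add_zero]
    _ = (N : ℝ≥0∞)⁻¹ := by
        rw [h2 k, nsmul_eq_mul, hcard]
        push_cast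
        rw [ENNReal.mul_inv (Or.inl hc0) (Or.inl (ENNReal.natCast_ne_top _)),
          ← mul_assoc, ENNReal.mul_inv_cancel hc0 (ENNReal.natCast_ne_top _), one_mul]

lemma slice (N : ℕ) (hN : 0 < N) (k : ℕ) (hk : k < N) (s : Set ℝ) (hs : MeasurableSet s) :
    (N : ℝ≥0∞)⁻¹ * volume ({u : ℝ | ((k : ℝ) + u) / N ∈ s} ∩ Set.Ico (0 : ℝ) 1)
      = volume (s ∩ Set.Ico ((k : ℝ) / N) (((k : ℝ) + 1) / N)) := by
  have hNR : (0 : ℝ) < N := by exact_mod_cast hN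
  set E := s ∩ Set.Ico ((k : ℝ) / N) (((k : ℝ) + 1) / N) with hE
  have h1 : {u : ℝ | ((k : ℝ) + u) / N ∈ s} ∩ Set.Ico (0 : ℝ) 1
      = ((k : ℝ) + ·) ⁻¹' ((· * (N : ℝ)⁻¹) ⁻¹' E) := by
    ext u
    have e1 : ((k : ℝ) + u) * (N : ℝ)⁻¹ = ((k : ℝ) + u) / N := (div_eq_mul_inv _ _).symm
    simp only [Set.mem_inter_iff, Set.mem_setOf_eq, Set.mem_Ico, Set.mem_preimage, hE, e1]
    constructor
    · rintro ⟨h1, h2, h3⟩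
      refine ⟨h1, ?_, ?_⟩
      · rw [div_le_div_iff_of_pos_right hNR]
        linarith
      · rw [div_lt_div_iff_of_pos_right hNR]
        linarith
    · rintro ⟨h1, h2, h3⟩
      rw [div_le_div_iff_of_pos_right hNR] at h2
      rw [div_lt_div_iff_of_pos_right hNR] at h3
      exact ⟨h1, by linarith, by linarith⟩
  rw [h1, measure_preimage_add, Real.volume_preimage_mul_right (by positivity), inv_inv,
    abs_of_pos hNR, ← mul_assoc]
  rw [show ENNReal.ofReal (N : ℝ) = (N : ℝ≥0∞) from by
    rw [ENNReal.ofReal_natCast]]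
  rw [ENNReal.inv_mul_cancel (by exact_mod_cast hN.ne') (ENNReal.natCast_ne_top _), one_mul]

lemma partition_Ico (N : ℕ) (hN : 0 < N) (s : Set ℝ) (hs : MeasurableSet s) :
    ∑ k : Fin N, volume (s ∩ Set.Ico (((k : ℕ) : ℝ) / N) ((((k : ℕ) : ℝ) + 1) / N))
      = volume (s ∩ Set.Ico (0 : ℝ) 1) := by
  have hNR : (0 : ℝ) < N := by exact_mod_cast hN
  have hunion : (⋃ k : Fin N, s ∩ Set.Ico (((k : ℕ) : ℝ) / N) ((((k : ℕ) : ℝ) + 1) / N))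
      = s ∩ Set.Ico (0 : ℝ) 1 := by
    ext x
    simp only [Set.mem_iUnion, Set.mem_inter_iff, Set.mem_Ico]
    constructor
    · rintro ⟨k, hx, h1, h2⟩
      refine ⟨hx, le_trans (by positivity) h1, lt_of_lt_of_le h2 ?_⟩
      rw [div_le_one hNR]
      have : (k : ℕ) + 1 ≤ N := k.2
      exact_mod_cast this
    · rintro ⟨hx, h1, h2⟩
      have hfl : ⌊x * N⌋₊ < N := by
        rw [Nat.floor_lt (by positivity)]
        calc x * N < 1 * N := by exact mul_lt_mul_of_pos_right h2 hNR
          _ = N := one_mul _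
      refine ⟨⟨⌊x * N⌋₊, hfl⟩, hx, ?_, ?_⟩
      · rw [div_le_iff₀ hNR]
        exact Nat.floor_le (by positivity)
      · rw [lt_div_iff₀ hNR]
        exact Nat.lt_floor_add_one _
  have hdisj : Pairwise (Function.onFun Disjoint
      fun k : Fin N => s ∩ Set.Ico (((k : ℕ) : ℝ) / N) ((((k : ℕ) : ℝ) + 1) / N)) := by
    intro k k' hne
    refine Set.disjoint_left.mpr ?_
    rintro x ⟨-, h1, h2⟩ ⟨-, h3, h4⟩
    apply hne
    have : (k : ℕ) = (k' : ℕ) := by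
      rcases Nat.lt_or_ge (k : ℕ) (k' : ℕ) with hlt | hge
      · exfalso
        have hle : ((k : ℕ) : ℝ) + 1 ≤ ((k' : ℕ) : ℝ) := by exact_mod_cast hlt
        have : (((k : ℕ) : ℝ) + 1) / N ≤ ((k' : ℕ) : ℝ) / N := by gcongr
        linarith
      · rcases Nat.lt_or_ge (k' : ℕ) (k : ℕ) with hlt' | hge'
        · exfalso
          have hle : ((k' : ℕ) : ℝ) + 1 ≤ ((k : ℕ) : ℝ) := by exact_mod_cast hlt'
          have : (((k' : ℕ) : ℝ) + 1) / N ≤ ((k : ℕ) : ℝ) / N := by gcongr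
          linarith
        · omega
    exact Fin.ext this
  rw [← hunion, measure_iUnion hdisj fun k => hs.inter measurableSet_Ico, tsum_fintype]


lemma key {Ω : Type*} [MeasurableSpace Ω] (μ : Measure Ω) [IsProbabilityMeasure μ]
    (d N : ℕ) (X : Fin N → Ω → Fin d → ℝ) (π : Fin d → Ω → Equiv.Perm (Fin N))
    (U : Fin N → Ω → Fin d → ℝ) (h : IsLHS μ d N X π U) (n : Fin N)
    (s : Fin d → Set ℝ) (hs : ∀ j, MeasurableSet (s j)) :
    μ (⋂ j, {ω | X n ω j ∈ s j}) = ∏ j, volume (s j ∩ Set.Ico (0 : ℝ) 1) := by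
  classical
  obtain ⟨h1, h2, h3, h4⟩ := h
  have hN : 0 < N := n.pos
  -- a.e.-measurability of the sources
  have hπ : ∀ j, AEMeasurable (π j) μ := by
    intro j
    by_contra hc
    have hj := h1 j
    rw [Measure.map_of_not_aemeasurable hc] at hj
    have h0 := congrArg (fun m : Measure (Equiv.Perm (Fin N)) => m Set.univ) hj
    simp at h0
  have hU : ∀ j, AEMeasurable (fun ω => U n ω j) μ := by
    intro j
    by_contra hc
    have hj := h2 n j
    rw [Measure.map_of_not_aemeasurable hc] at hj
    have h0 := congrArg (fun m : Measure ℝ => m Set.univ) hj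
    simp [Real.volume_Ico] at h0
  -- the basic events
  set A : Fin d → Fin N → Set Ω := fun j k => (π j) ⁻¹' {σ | σ n = k} with hA
  set T : Fin d → Fin N → Set ℝ := fun j k => {u : ℝ | (((k : ℕ) : ℝ) + u) / N ∈ s j} with hT
  set B : Fin d → Fin N → Set Ω := fun j k => (fun ω => U n ω j) ⁻¹' T j k with hB
  have hTmeas : ∀ j k, MeasurableSet (T j k) :=
    fun j k => (hs j).preimage ((measurable_const.add measurable_id).div_const _)
  have hAval : ∀ j k, μ (A j k) = (N : ℝ≥0∞)⁻¹ := by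
    intro j k
    rw [hA]
    rw [← Measure.map_apply_of_aemeasurable (hπ j) MeasurableSpace.measurableSet_top, h1 j,
      uniform_perm_eval]
  have hBval : ∀ j k, μ (B j k) = volume (T j k ∩ Set.Ico (0 : ℝ) 1) := by
    intro j k
    rw [hB]
    rw [← Measure.map_apply_of_aemeasurable (hU j) (hTmeas j k), h2 n j,
      Measure.restrict_apply (hTmeas j k)]
  -- decomposition of the event
  have hdecomp : (⋂ j, {ω | X n ω j ∈ s j})
      = ⋃ κ : Fin d → Fin N, ⋂ j, A j (κ j) ∩ B j (κ j) := by
    ext ω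
    simp only [Set.mem_iInter, Set.mem_iUnion, Set.mem_inter_iff, Set.mem_preimage,
      Set.mem_setOf_eq, hA, hB, hT]
    constructor
    · intro hω
      refine ⟨fun j => π j ω n, fun j => ⟨rfl, ?_⟩⟩
      have := hω j
      rwa [h4 n j ω] at this
    · rintro ⟨κ, hκ⟩ j
      rw [h4 n j ω, (hκ j).1]
      exact (hκ j).2
  -- null measurability and disjointness
  have hnull : ∀ κ : Fin d → Fin N, NullMeasurableSet (⋂ j, A j (κ j) ∩ B j (κ j)) μ := by
    intro κ
    exact NullMeasurableSet.iInter fun j =>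
      ((hπ j).nullMeasurable MeasurableSpace.measurableSet_top).inter
        ((hU j).nullMeasurable (hTmeas j (κ j)))
  have hdisj : Pairwise (Function.onFun (AEDisjoint μ)
      fun κ : Fin d → Fin N => ⋂ j, A j (κ j) ∩ B j (κ j)) := by
    intro κ κ' hne
    apply Disjoint.aedisjoint
    obtain ⟨j, hj⟩ := Function.ne_iff.mp hne
    refine Set.disjoint_left.mpr fun ω hω hω' => hj ?_
    have e1 := (Set.mem_iInter.mp hω j).1
    have e2 := (Set.mem_iInter.mp hω' j).1
    simp only [hA, Set.mem_preimage, Set.mem_setOf_eq] at e1 e2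
    rw [← e1, ← e2]
  -- independence: product formula for each κ
  have hprod : ∀ κ : Fin d → Fin N,
      μ (⋂ j, A j (κ j) ∩ B j (κ j)) = ∏ j, ((N : ℝ≥0∞)⁻¹ * μ (B j (κ j))) := by
    intro κ
    set sets : ∀ i : Fin d ⊕ (Fin N × Fin d), Set (lhsβ d N i) := fun i =>
      match i with
      | .inl j => {σ : Equiv.Perm (Fin N) | σ n = κ j}
      | .inr p => if p.1 = n then T p.2 (κ p.2) else Set.univ
      with hsets
    set S : Finset (Fin d ⊕ (Fin N × Fin d)) :=
      (Finset.univ.image (Sum.inl : Fin d → Fin d ⊕ (Fin N × Fin d))) ∪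
      (Finset.univ.image fun j : Fin d => Sum.inr (n, j)) with hS
    have hmeas : ∀ i ∈ S, MeasurableSet[lhsMS d N i] (sets i) := by
      rintro (j | p) _
      · exact MeasurableSpace.measurableSet_top
      · show MeasurableSet (if p.1 = n then T p.2 (κ p.2) else Set.univ)
        split_ifs
        · exact hTmeas _ _
        · exact MeasurableSet.univ
    have hindep := h3.measure_inter_preimage_eq_mul S hmeas
    have hset : (⋂ i ∈ S, lhsFun π U i ⁻¹' sets i) = ⋂ j, A j (κ j) ∩ B j (κ j) := by
      ext ω
      simp only [Set.mem_iInter, hS, Finset.mem_union, Finset.mem_image, Finset.mem_univ,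
        true_and]
      constructor
      · intro hi j
        have ha := hi (Sum.inl j) (Or.inl ⟨j, rfl⟩)
        have hb := hi (Sum.inr (n, j)) (Or.inr ⟨j, rfl⟩)
        simp only [hsets, Set.mem_preimage, if_pos rfl] at ha hb
        exact ⟨ha, hb⟩
      · rintro hj i hi
        rcases hi with ⟨j, rfl⟩ | ⟨j, rfl⟩
        · exact (hj j).1
        · simp only [hsets, Set.mem_preimage, if_pos rfl]
          exact (hj j).2
    have hinj1 : Function.Injective (Sum.inl : Fin d → Fin d ⊕ (Fin N × Fin d)) :=
      Sum.inl_injective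
    have hinj2 : Function.Injective (fun j : Fin d => (Sum.inr (n, j) : Fin d ⊕ (Fin N × Fin d))) := by
      intro a b hab
      simpa using hab
    have hdisjS : Disjoint (Finset.univ.image (Sum.inl : Fin d → Fin d ⊕ (Fin N × Fin d)))
        (Finset.univ.image fun j : Fin d => (Sum.inr (n, j) : Fin d ⊕ (Fin N × Fin d))) := by
      rw [Finset.disjoint_left]
      rintro x hx hx'
      simp only [Finset.mem_image, Finset.mem_univ, true_and] at hx hx'
      obtain ⟨a, rfl⟩ := hx
      obtain ⟨b, hb⟩ := hx'
      exact Sum.inr_ne_inl hb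
    rw [hset] at hindep
    rw [hindep, hS, Finset.prod_union hdisjS, Finset.prod_image (fun a _ b _ => fun hab => hinj1 hab),
      Finset.prod_image (fun a _ b _ => fun hab => hinj2 hab)]
    have hprodA : ∀ j : Fin d, μ (lhsFun π U (Sum.inl j) ⁻¹' sets (Sum.inl j)) = (N : ℝ≥0∞)⁻¹ := by
      intro j
      rw [show lhsFun π U (Sum.inl j) ⁻¹' sets (Sum.inl j) = A j (κ j) from rfl]
      exact hAval j (κ j)
    have hprodB : ∀ j : Fin d,
        μ (lhsFun π U (Sum.inr (n, j)) ⁻¹' sets (Sum.inr (n, j))) = μ (B j (κ j)) := by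
      intro j
      congr 1
      show (fun ω => U n ω j) ⁻¹' (if n = n then T j (κ j) else Set.univ) = B j (κ j)
      rw [if_pos rfl]
    rw [Finset.prod_congr rfl fun j _ => hprodA j, Finset.prod_congr rfl fun j _ => hprodB j,
      ← Finset.prod_mul_distrib]
  -- putting everything together
  rw [hdecomp, measure_iUnion₀ hdisj hnull, tsum_fintype,
    Finset.sum_congr rfl fun κ _ => hprod κ]
  have hswap : ∑ κ : Fin d → Fin N, ∏ j, ((N : ℝ≥0∞)⁻¹ * μ (B j (κ j)))
      = ∏ j, ∑ k : Fin N, ((N : ℝ≥0∞)⁻¹ * μ (B j k)) := by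
    rw [Finset.prod_univ_sum]
    rw [← Fintype.piFinset_univ]
  rw [hswap]
  refine Finset.prod_congr rfl fun j _ => ?_
  have : ∀ k : Fin N, (N : ℝ≥0∞)⁻¹ * μ (B j k)
      = volume (s j ∩ Set.Ico (((k : ℕ) : ℝ) / N) ((((k : ℕ) : ℝ) + 1) / N)) := by
    intro k
    rw [hBval j k, hT]
    exact slice N hN k k.2 (s j) (hs j)
  rw [Finset.sum_congr rfl fun k _ => this k]
  exact partition_Ico N hN (s j) (hs j)

/-- Each point of a LHS is uniformly distributed on `[0,1)^d`. -/
theorem stmt13 {Ω : Type*} [MeasurableSpace Ω] (μ : Measure Ω) [IsProbabilityMeasure μ]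
    (d N : ℕ)
    (X : Fin N → Ω → Fin d → ℝ) (π : Fin d → Ω → Equiv.Perm (Fin N))
    (U : Fin N → Ω → Fin d → ℝ) (h : IsLHS μ d N X π U) (n : Fin N) :
    Measure.map (X n) μ = volume.restrict (unitCube d) := by
  classical
  obtain ⟨h1, h2, h3, h4⟩ := h
  have hN : 0 < N := n.pos
  have hπ : ∀ j, AEMeasurable (π j) μ := by
    intro j
    by_contra hc
    have hj := h1 j
    rw [Measure.map_of_not_aemeasurable hc] at hj
    have h0 := congrArg (fun m : Measure (Equiv.Perm (Fin N)) => m Set.univ) hj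
    simp at h0
  have hU : ∀ j, AEMeasurable (fun ω => U n ω j) μ := by
    intro j
    by_contra hc
    have hj := h2 n j
    rw [Measure.map_of_not_aemeasurable hc] at hj
    have h0 := congrArg (fun m : Measure ℝ => m Set.univ) hj
    simp [Real.volume_Ico] at h0
  -- a.e.-measurability of `X n`
  have hXj : ∀ j, AEMeasurable (fun ω => X n ω j) μ := by
    intro j
    have heq : (fun ω => X n ω j) = fun ω => (((π j ω n : ℕ) : ℝ) + U n ω j) / N := by
      funext ω; exact h4 n j ω
    rw [heq]
    have hg : AEMeasurable (fun ω => ((π j ω n : ℕ) : ℝ)) μ :=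
      (show Measurable fun σ : Equiv.Perm (Fin N) => ((σ n : ℕ) : ℝ) from
        measurable_from_top).comp_aemeasurable (hπ j)
    exact (hg.add (hU j)).div_const _
  have hX : AEMeasurable (X n) μ := by
    refine ⟨fun ω j => (hXj j).mk _ ω, measurable_pi_lambda _ fun j => (hXj j).measurable_mk, ?_⟩
    have hae : ∀ᵐ ω ∂μ, ∀ j, X n ω j = (hXj j).mk _ ω :=
      (MeasureTheory.ae_all_iff).mpr fun j => (hXj j).ae_eq_mk
    filter_upwards [hae] with ω hω
    funext j
    exact hω j
  haveI : IsFiniteMeasure (volume.restrict (Set.Ico (0 : ℝ) 1)) := by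
    constructor
    rw [Measure.restrict_apply_univ]
    simp [Real.volume_Ico]
  have hcube : unitCube d = Set.pi Set.univ fun _ : Fin d => Set.Ico (0 : ℝ) 1 := by
    ext x
    simp [unitCube, Set.mem_pi]
  have e1 : Measure.pi (fun _ : Fin d => volume.restrict (Set.Ico (0 : ℝ) 1))
      = Measure.map (X n) μ := by
    refine Measure.pi_eq fun s hs => ?_
    rw [Measure.map_apply_of_aemeasurable hX (MeasurableSet.univ_pi hs)]
    have hpre : X n ⁻¹' Set.pi Set.univ s = ⋂ j, {ω | X n ω j ∈ s j} := by
      ext ω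
      simp [Set.mem_pi]
    rw [hpre, key μ d N X π U ⟨h1, h2, h3, h4⟩ n s hs]
    exact Finset.prod_congr rfl fun j _ => (Measure.restrict_apply (hs j)).symm
  have e2 : Measure.pi (fun _ : Fin d => volume.restrict (Set.Ico (0 : ℝ) 1))
      = volume.restrict (unitCube d) := by
    refine Measure.pi_eq fun s hs => ?_
    rw [Measure.restrict_apply (MeasurableSet.univ_pi hs), hcube, ← Set.pi_inter_distrib,
      volume_pi_pi]
    exact Finset.prod_congr rfl fun j _ => (Measure.restrict_apply (hs j)).symm
  exact e1.symm.trans e2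

end LHSPaper
end
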